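/- arXiv:0907.0172 — 5 statements merged into one kernel-verified Lean document; each statement's English description precedes it below -/
import Mathlib

section
/- Let N be an even positive integer and v := exp(πi/N). Then for every integer l with 0 ≤ l ≤ N−1 one has ∑_{j=1, j odd}^{N−1} D₀(j,l) = 0, where D₀(j,l) := (v^j + v^{−j})·( ∏_{k=1}^l A(j,k) + 2{j}² · ∑_{k=1}^l ∏_{1≤k'≤l, k'≠k} A(j,k') ). (This is the identity which, via Habiro's cyclotomic expansion, proves that the Kashaev invariant ⟨K^{(0,2)}⟩_N of the disconnected (0,2)-cable of any knot K vanishes for every even N.) -/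
open Complex

/-- `v = exp(πi/N)`. -/
noncomputable def vN (N : ℕ) : ℂ := Complex.exp (Real.pi * Complex.I / N)

/-- `{n} = v^n - v^{-n}` at `v = exp(πi/N)`. -/
noncomputable def br (N : ℕ) (n : ℤ) : ℂ := vN N ^ n - vN N ^ (-n)

/-- `A(j,k) = {j-k}{j+k}`. -/
noncomputable def AA (N : ℕ) (j k : ℤ) : ℂ := br N (j - k) * br N (j + k)

/-- `D_m(j,l)` from the context. -/
noncomputable def DD (N : ℕ) (m j : ℤ) (l : ℕ) : ℂ :=
  (vN N ^ j + vN N ^ (-j)) *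
      ((∏ k ∈ Finset.Icc 1 l, AA N j (k : ℤ)) +
        2 * (br N j) ^ 2 *
          ∑ k ∈ Finset.Icc 1 l, ∏ k' ∈ (Finset.Icc 1 l).erase k, AA N j (k' : ℤ)) +
    ((m : ℂ) * (j : ℂ) / 2) * br N j * ∏ k ∈ Finset.Icc 1 l, AA N j (k : ℤ)

lemma vN_ne_zero (N : ℕ) : vN N ≠ 0 := Complex.exp_ne_zero _

lemma vN_zpow_N (N : ℕ) (hN : 0 < N) : vN N ^ (N : ℤ) = -1 := by
  have hNc : (N : ℂ) ≠ 0 := Nat.cast_ne_zero.mpr hN.ne'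
  rw [zpow_natCast, vN, ← Complex.exp_nat_mul]
  rw [show (N : ℂ) * (↑Real.pi * Complex.I / N) = ↑Real.pi * Complex.I by
    field_simp]
  exact Complex.exp_pi_mul_I

lemma vN_zpow_N_sub (N : ℕ) (hN : 0 < N) (m : ℤ) :
    vN N ^ ((N : ℤ) - m) = -vN N ^ (-m) := by
  rw [zpow_sub₀ (vN_ne_zero N), vN_zpow_N N hN, zpow_neg]
  field_simp

lemma vN_zpow_sub_N (N : ℕ) (hN : 0 < N) (m : ℤ) :
    vN N ^ (m - (N : ℤ)) = -vN N ^ m := by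
  rw [zpow_sub₀ (vN_ne_zero N), vN_zpow_N N hN, div_neg, div_one]

lemma br_N_sub (N : ℕ) (hN : 0 < N) (m : ℤ) : br N ((N : ℤ) - m) = br N m := by
  unfold br
  rw [vN_zpow_N_sub N hN, show -((N : ℤ) - m) = m - N by ring, vN_zpow_sub_N N hN]
  ring

lemma AA_N_sub (N : ℕ) (hN : 0 < N) (j k : ℤ) : AA N ((N : ℤ) - j) k = AA N j k := by
  unfold AA
  rw [show (N : ℤ) - j - k = (N : ℤ) - (j + k) by ring,
    show (N : ℤ) - j + k = (N : ℤ) - (j - k) by ring,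
    br_N_sub N hN, br_N_sub N hN, mul_comm]

lemma DD_N_sub (N : ℕ) (hN : 0 < N) (j : ℤ) (l : ℕ) :
    DD N 0 ((N : ℤ) - j) l = -DD N 0 j l := by
  unfold DD
  simp only [AA_N_sub N hN, br_N_sub N hN, Int.cast_zero, zero_mul, zero_div,
    add_zero, zero_add]
  have h1 : vN N ^ ((N : ℤ) - j) = -vN N ^ (-j) := vN_zpow_N_sub N hN j
  have h2 : vN N ^ (-((N : ℤ) - j)) = -vN N ^ j := by
    rw [show -((N : ℤ) - j) = j - N by ring, vN_zpow_sub_N N hN]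
  rw [h1, h2]
  ring

/-- For every even positive `N` and every `0 ≤ l ≤ N-1`, the sum of `D₀(j,l)` over
odd `j` with `1 ≤ j ≤ N-1` vanishes. -/
theorem sum_D_zero_eq_zero_of_even (N : ℕ) (hN : 0 < N) (hNeven : Even N)
    (l : ℕ) (hl : l ≤ N - 1) :
    ∑ j ∈ (Finset.Icc 1 (N - 1)).filter (fun j => Odd j), DD N 0 (j : ℤ) l = 0 := by
  have key : ∀ j ∈ (Finset.Icc 1 (N - 1)).filter (fun j => Odd j),
      DD N 0 (j : ℤ) l + DD N 0 ((N - j : ℕ) : ℤ) l = 0 := by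
    intro j hj
    simp only [Finset.mem_filter, Finset.mem_Icc] at hj
    have hjN : j ≤ N := le_trans hj.1.2 (Nat.sub_le N 1)
    have : ((N - j : ℕ) : ℤ) = (N : ℤ) - j := by
      push_cast [Nat.cast_sub hjN]; ring
    rw [this, DD_N_sub N hN]
    ring
  refine Finset.sum_involution (fun j _ => N - j) (fun a ha => key a ha)
    (fun a ha hfa => ?_) (fun a ha => ?_) (fun a ha => ?_)
  · -- g a ≠ a when f a ≠ 0
    intro hga
    apply hfa
    have hga' : N - a = a := hga
    have h := key a ha
    rw [hga'] at h
    have h2 : (2 : ℂ) * DD N 0 (a : ℤ) l = 0 := by rw [two_mul]; exact h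
    simpa using h2
  · -- membership
    simp only [Finset.mem_filter, Finset.mem_Icc] at ha ⊢
    obtain ⟨⟨h1, h2⟩, hodd⟩ := ha
    have haN : a ≤ N := le_trans h2 (Nat.sub_le N 1)
    refine ⟨⟨?_, ?_⟩, Nat.Even.sub_odd haN hNeven hodd⟩
    · omega
    · omega
  · -- involution
    simp only [Finset.mem_filter, Finset.mem_Icc] at ha
    show N - (N - a) = a
    omega
end

section
/- In the ring ℤ[v^{±1}] of Laurent polynomials over ℤ in one variable v, define {n} := v^n − v^{−n}, [n] := {n}/{1} (a Laurent polynomial), and A(j,k) := {j−k}{j+k}. Then for all integers j, k and every positive integer N, the element A(N−j,k) − A(N+j,k) − 2·[2j]·{N}·{N−1} is divisible by {N}² in ℤ[v^{±1}]. -/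
open LaurentPolynomial

/-- `{n} = v^n - v^{-n}` in `ℤ[v^{±1}]`. -/
noncomputable def brL (n : ℤ) : LaurentPolynomial ℤ := T n - T (-n)

/-- `A(j,k) = {j-k}{j+k}` in `ℤ[v^{±1}]`. -/
noncomputable def AL (j k : ℤ) : LaurentPolynomial ℤ := brL (j - k) * brL (j + k)

/-- The quantum integer `[n] = {n}/{1} = v^{n-1} + v^{n-3} + ⋯ + v^{1-n}` in
`ℤ[v^{±1}]`, extended to negative `n` by `[-n] = -[n]`. -/
noncomputable def qL (n : ℤ) : LaurentPolynomial ℤ :=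
  if 0 ≤ n then ∑ k ∈ Finset.range n.toNat, T (n - 1 - 2 * k)
  else - ∑ k ∈ Finset.range (-n).toNat, T (-n - 1 - 2 * k)

lemma sum_tel (c : ℤ) (m : ℕ) :
    (∑ k ∈ Finset.range m, T (c - 2 * k)) * (T 1 - T (-1) : LaurentPolynomial ℤ)
      = T (c + 1) - T (c + 1 - 2 * m) := by
  induction m with
  | zero => simp
  | succ m ih =>
    rw [Finset.sum_range_succ, add_mul, ih]
    push_cast
    rw [mul_sub, ← T_add, ← T_add]
    ring_nf

lemma qL_mul (n : ℤ) : qL n * (T 1 - T (-1) : LaurentPolynomial ℤ) = T n - T (-n) := by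
  rcases le_or_gt 0 n with h | h
  · rw [qL, if_pos h]
    have := sum_tel (n - 1) n.toNat
    rw [Int.toNat_of_nonneg h, show n - 1 + 1 - 2 * n = -n from by ring,
      show n - 1 + 1 = n from by ring] at this
    exact this
  · rw [qL, if_neg (not_le.mpr h), neg_mul]
    have := sum_tel (-n - 1) (-n).toNat
    rw [Int.toNat_of_nonneg (by omega), show -n - 1 + 1 - 2 * -n = n from by ring,
      show -n - 1 + 1 = -n from by ring] at this
    rw [this]; ring

lemma brL_mul (a b : ℤ) : brL a * brL b
    = T (a + b) + T (-(a + b)) - T (a - b) - T (b - a) := by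
  simp only [brL, sub_mul, mul_sub, ← T_add]
  ring_nf

lemma brL_two_mul (n : ℤ) : brL (2 * n) = brL n * (T n + T (-n)) := by
  simp only [brL, sub_mul, mul_add, ← T_add]
  ring_nf

lemma star_id (n : ℤ) :
    brL 1 * (T n + T (-n)) + 2 * brL (n - 1) = (T 1 + T (-1)) * brL n := by
  simp only [brL, sub_mul, mul_add, add_mul, mul_sub, ← T_add]
  ring_nf

/-- `A(N-j,k) - A(N+j,k) - 2[2j]{N}{N-1}` is divisible by `{N}²` in `ℤ[v^{±1}]`. -/
theorem brL_sq_dvd (j k : ℤ) (N : ℕ) (hN : 0 < N) :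
    brL N ^ 2 ∣ AL ((N : ℤ) - j) k - AL ((N : ℤ) + j) k
      - 2 * qL (2 * j) * brL N * brL ((N : ℤ) - 1) := by
  set n := (N : ℤ)
  have hQ : qL (2 * j) * brL 1 = brL (2 * j) := by
    simpa [brL] using qL_mul (2 * j)
  have hdiff : AL (n - j) k - AL (n + j) k = -(brL (2 * j) * brL (2 * n)) := by
    simp only [AL, brL_mul]
    ring_nf
  refine ⟨-(qL (2 * j)) * (T 1 + T (-1)), ?_⟩
  linear_combination hdiff + (brL (2 * n)) * hQ
    + (-(qL (2 * j) * brL 1)) * brL_two_mul n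
    + (-(qL (2 * j) * brL n)) * star_id n
end

section
/- Let m, j be integers and N a positive integer. In the Laurent polynomial ring ℚ(i)[w^{±1}] over the field ℚ(i) (i the imaginary unit), set v := w⁴, {N} := v^N − v^{−N}, t_j := i^{N−1−j}·w^{(N+j)²} and t_{−j} := i^{N−1+j}·w^{(N−j)²} (these are units, so their m-th powers are defined for all integers m). Then there exists Q ∈ ℚ(i)[w^{±1}] such that t_{−j}^m = t_j^m + (mj/2)·t_j^m·{N} + t_j^m·(v^N + 1)²·Q. -/
open LaurentPolynomial IntermediateField

/-- The imaginary unit `i` as an element of the field `ℚ(i)`, realized as the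
intermediate field `ℚ⟮i⟯` of `ℂ`. -/
noncomputable def ii : ℚ⟮Complex.I⟯ := AdjoinSimple.gen ℚ Complex.I

/-- The `m`-th power `t_j^m` of the unit `t_j = i^{N-1-j} w^{(N+j)²}` of the Laurent
polynomial ring `ℚ(i)[w^{±1}]` (for a unit `u·w^b` with `u` a nonzero scalar one has
`(u·w^b)^m = u^m·w^{mb}` for every integer `m`). -/
noncomputable def tpow (m N j : ℤ) : LaurentPolynomial ℚ⟮Complex.I⟯ :=
  C (ii ^ (m * (N - 1 - j))) * T (m * (N + j) ^ 2)

lemma ii_sq : ii ^ 2 = -1 := by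
  have : ((ii ^ 2 : ℚ⟮Complex.I⟯) : ℂ) = ((-1 : ℚ⟮Complex.I⟯) : ℂ) := by
    push_cast [ii, AdjoinSimple.coe_gen]
    simp [Complex.I_sq]
  exact_mod_cast this

lemma ii_ne_zero : ii ≠ 0 := by
  intro h
  have := ii_sq
  rw [h] at this
  simp at this

/-- Key divisibility lemma: `(-1)^k x^{-k} ≡ 1 + (k/2)(x - x⁻¹) mod (x+1)²`
with `x = T n`. -/
lemma key (n : ℤ) (k : ℤ) :
    ∃ Q : LaurentPolynomial ℚ⟮Complex.I⟯,
      C ((-1 : ℚ⟮Complex.I⟯) ^ k) * T (-(n * k)) =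
        1 + C (((k : ℚ) / 2 : ℚ) : ℚ⟮Complex.I⟯) * (T n - T (-n))
          + (T n + 1) ^ 2 * Q := by
  have hne : (-1 : ℚ⟮Complex.I⟯) ≠ 0 := by norm_num
  set a : LaurentPolynomial ℚ⟮Complex.I⟯ := T n with ha
  set b : LaurentPolynomial ℚ⟮Complex.I⟯ := T (-n) with hb
  have hab : a * b = 1 := by rw [ha, hb, ← T_add, add_neg_cancel, T_zero]
  set h : LaurentPolynomial ℚ⟮Complex.I⟯ :=
    C ((((1 : ℚ) / 2 : ℚ) : ℚ⟮Complex.I⟯)) with hh'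
  have hh : h + h = 1 := by
    have h2 : ((((1 : ℚ) / 2 : ℚ) : ℚ⟮Complex.I⟯)) + (((1 : ℚ) / 2 : ℚ) : ℚ⟮Complex.I⟯) = 1 := by
      push_cast
      norm_num
    rw [hh', ← map_add, h2, map_one]
  induction k using Int.induction_on with
  | zero =>
    refine ⟨0, ?_⟩
    simp
  | succ k ih =>
    obtain ⟨q, hq⟩ := ih
    set c : LaurentPolynomial ℚ⟮Complex.I⟯ :=
      C ((((k : ℤ) : ℚ) / 2 : ℚ) : ℚ⟮Complex.I⟯) with hc'
    have hch : C (((((k : ℤ) + 1 : ℤ) : ℚ) / 2 : ℚ) : ℚ⟮Complex.I⟯) = c + h := by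
      rw [hc', hh', ← map_add]
      congr 1
      push_cast
      ring
    refine ⟨-b * q - (c + h) * b + c * b ^ 2, ?_⟩
    have hL : C ((-1 : ℚ⟮Complex.I⟯) ^ ((k : ℤ) + 1)) * T (-(n * ((k : ℤ) + 1)))
        = -b * (C ((-1 : ℚ⟮Complex.I⟯) ^ (k : ℤ)) * T (-(n * (k : ℤ)))) := by
      rw [zpow_add_one₀ hne]
      have : -(n * ((k : ℤ) + 1)) = -(n * (k : ℤ)) + -n := by ring
      rw [this, T_add, map_mul, map_neg, map_one, hb]
      ring
    rw [hL, hq, hch]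
    linear_combination (-2 * c + (c + h) * a + 2 * (c + h) - c * a * b - 2 * c * b) * hab
      + (1 + b) * hh
  | pred k ih =>
    obtain ⟨q, hq⟩ := ih
    set c : LaurentPolynomial ℚ⟮Complex.I⟯ :=
      C (((((-k : ℤ)) : ℚ) / 2 : ℚ) : ℚ⟮Complex.I⟯) with hc'
    have hch : C ((((-(k : ℤ) - 1 : ℤ) : ℚ) / 2 : ℚ) : ℚ⟮Complex.I⟯) = c - h := by
      rw [hc', hh', ← map_sub]
      congr 1
      push_cast
      ring
    refine ⟨-a * q - c + (c - h) * b, ?_⟩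
    have hL : C ((-1 : ℚ⟮Complex.I⟯) ^ (-(k : ℤ) - 1)) * T (-(n * (-(k : ℤ) - 1)))
        = -a * (C ((-1 : ℚ⟮Complex.I⟯) ^ (-(k : ℤ))) * T (-(n * (-(k : ℤ))))) := by
      rw [zpow_sub_one₀ hne]
      have : -(n * (-(k : ℤ) - 1)) = -(n * (-(k : ℤ))) + n := by ring
      rw [this, T_add, map_mul, inv_neg_one, map_neg, map_one, ha]
      ring
    rw [hL, hq, hch]
    linear_combination (c - (c - h) * a - 2 * (c - h)) * hab + (1 + a) * hh

/-- With `v = w⁴` and `{N} = v^N - v^{-N}` in `ℚ(i)[w^{±1}]`, there is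
`Q ∈ ℚ(i)[w^{±1}]` with `t_{-j}^m = t_j^m + (mj/2) t_j^m {N} + t_j^m (v^N+1)² Q`. -/
theorem tpow_neg_eq (m j : ℤ) (N : ℕ) (hN : 0 < N) :
    ∃ Q : LaurentPolynomial ℚ⟮Complex.I⟯,
      tpow m N (-j) =
        tpow m N j
          + C ((((m * j : ℤ) : ℚ) / 2 : ℚ) : ℚ⟮Complex.I⟯) * tpow m N j
              * (T (4 * (N : ℤ)) - T (-(4 * (N : ℤ))))
          + tpow m N j * (T (4 * (N : ℤ)) + 1) ^ 2 * Q := by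
  obtain ⟨q, hq⟩ := key (4 * (N : ℤ)) (m * j)
  refine ⟨q, ?_⟩
  have hfac : tpow m N (-j)
      = tpow m N j * (C ((-1 : ℚ⟮Complex.I⟯) ^ (m * j)) * T (-(4 * (N : ℤ) * (m * j)))) := by
    unfold tpow
    rw [← mul_assoc, mul_assoc (C _) (T _), mul_comm (T (m * ((N : ℤ) + j) ^ 2)),
      ← mul_assoc, ← map_mul, mul_assoc, ← T_add]
    have he : m * ((N : ℤ) + j) ^ 2 + -(4 * (N : ℤ) * (m * j)) = m * ((N : ℤ) + -j) ^ 2 := by ring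
    have hi : ii ^ (m * ((N : ℤ) - 1 - j)) * (-1 : ℚ⟮Complex.I⟯) ^ (m * j)
        = ii ^ (m * ((N : ℤ) - 1 - -j)) := by
      rw [← ii_sq, ← zpow_natCast ii 2, ← zpow_mul, ← zpow_add₀ ii_ne_zero]
      congr 1
      ring
    rw [he, hi]
  rw [hfac, hq]
  ring
end

section
/- Let N be a positive integer, m an integer, and j, l integers with 1 ≤ j ≤ N−1 and 0 ≤ l ≤ N−1. Set ω := exp(πi/(4N)). For a nonzero complex variable w let v(w) := w⁴, {n}(w) := v(w)^n − v(w)^{−n}, [n](w) := {n}(w)/{1}(w), A(n,k)(w) := {n−k}(w)·{n+k}(w), t_j(w) := i^{N−1−j}·w^{(N+j)²} and t_{−j}(w) := i^{N−1+j}·w^{(N−j)²}. Then lim_{w→ω} ( t_j(w)^m·[N+j](w)·∏_{k=1}^l A(N+j,k)(w) + t_{−j}(w)^m·[N−j](w)·∏_{k=1}^l A(N−j,k)(w) ) / [N](w) = t_j(ω)^m · D_m(j,l), where D_m(j,l) is evaluated at v = exp(πi/N). (Note [N](ω) = 0, so the left-hand side is a genuine limit of a quotient of analytic functions.) -/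
open Complex Filter
open scoped Topology

/-- `v(w) = w⁴`. -/
noncomputable def vw (w : ℂ) : ℂ := w ^ (4 : ℕ)

/-- `{n}(w) = v(w)^n - v(w)^{-n}`. -/
noncomputable def brw (n : ℤ) (w : ℂ) : ℂ := vw w ^ n - vw w ^ (-n)

/-- `[n](w) = {n}(w)/{1}(w)`. -/
noncomputable def qw (n : ℤ) (w : ℂ) : ℂ := brw n w / brw 1 w

/-- `A(n,k)(w) = {n-k}(w)·{n+k}(w)`. -/
noncomputable def Aw (n k : ℤ) (w : ℂ) : ℂ := brw (n - k) w * brw (n + k) w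

/-- `t_j(w) = i^{N-1-j} w^{(N+j)²}` (for `j` and `-j`, use `tw N j` and `tw N (-j)`). -/
noncomputable def tw (N : ℕ) (j : ℤ) (w : ℂ) : ℂ :=
  Complex.I ^ ((N : ℤ) - 1 - j) * w ^ (((N : ℤ) + j) ^ 2)

noncomputable def bd (n : ℤ) (w : ℂ) : ℂ := 4 * n / w * (vw w ^ n + vw w ^ (-n))
noncomputable def AD (n k : ℤ) (w : ℂ) : ℂ :=
  bd (n - k) w * brw (n + k) w + brw (n - k) w * bd (n + k) w

lemma tendsto_div_slope {f g : ℂ → ℂ} {x f' g' : ℂ} (hf : HasDerivAt f f' x)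
    (hg : HasDerivAt g g' x) (hf0 : f x = 0) (hg0 : g x = 0) (hg' : g' ≠ 0) :
    Tendsto (fun w => f w / g w) (𝓝[≠] x) (𝓝 (f' / g')) := by
  have h := (hasDerivAt_iff_tendsto_slope.1 hf).div (hasDerivAt_iff_tendsto_slope.1 hg) hg'
  refine h.congr' ?_
  filter_upwards [self_mem_nhdsWithin] with w hw
  have hwx : w - x ≠ 0 := sub_ne_zero.2 hw
  show slope f x w / slope g x w = f w / g w
  rw [slope_def_field, slope_def_field, hf0, hg0, sub_zero, sub_zero,
    div_div_div_cancel_right₀ hwx]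

lemma brw_eq (n : ℤ) (w : ℂ) : brw n w = w ^ (4*n) - w ^ (-(4*n)) := by
  rw [brw, vw, ← zpow_natCast w 4, ← zpow_mul, ← zpow_mul, mul_neg]
  norm_num

lemma hasDerivAt_brw (n : ℤ) {w : ℂ} (hw : w ≠ 0) :
    HasDerivAt (brw n) (bd n w) w := by
  have h1 := hasDerivAt_zpow (4*n) w (Or.inl hw)
  have h2 := hasDerivAt_zpow (-(4*n)) w (Or.inl hw)
  have h := (h1.fun_sub h2)
  have hfun : (fun w : ℂ => w ^ (4*n) - w ^ (-(4*n))) = brw n := by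
    funext w; rw [brw_eq]
  rw [hfun] at h
  refine h.congr_deriv (Eq.symm ?_)
  have hvw1 : vw w ^ n = w ^ (4*n) := by
    rw [vw, ← zpow_natCast w 4, ← zpow_mul]; norm_num
  have hvw2 : vw w ^ (-n) = w ^ (-(4*n)) := by
    rw [vw, ← zpow_natCast w 4, ← zpow_mul, mul_neg]; norm_num
  rw [bd, hvw1, hvw2, zpow_sub_one₀ hw, zpow_sub_one₀ hw]
  have hX : w ^ (4*n) ≠ 0 := zpow_ne_zero _ hw
  field_simp
  push_cast
  ring

lemma hasDerivAt_Aw (n k : ℤ) {w : ℂ} (hw : w ≠ 0) :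
    HasDerivAt (Aw n k) (AD n k w) w :=
  (hasDerivAt_brw (n-k) hw).mul (hasDerivAt_brw (n+k) hw)

lemma hasDerivAt_tw_zpow (N : ℕ) (j m : ℤ) {w : ℂ} (hw : w ≠ 0) :
    HasDerivAt (fun w => tw N j w ^ m) (m * ((N : ℂ) + j) ^ 2 / w * tw N j w ^ m) w := by
  have hI : (Complex.I : ℂ) ≠ 0 := Complex.I_ne_zero
  have hIe : Complex.I ^ ((N : ℤ) - 1 - j) ≠ 0 := zpow_ne_zero _ hI
  have hws : w ^ (((N : ℤ) + j) ^ 2) ≠ 0 := zpow_ne_zero _ hw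
  have htw0 : tw N j w ≠ 0 := mul_ne_zero hIe hws
  have hz := hasDerivAt_zpow (((N : ℤ) + j) ^ 2) w (Or.inl hw)
  have ht : HasDerivAt (tw N j)
      (Complex.I ^ ((N : ℤ) - 1 - j) * ((((N : ℤ) + j) ^ 2 : ℤ) * w ^ ((((N : ℤ) + j) ^ 2) - 1))) w :=
    hz.const_mul _
  have hp := (hasDerivAt_zpow m (tw N j w) (Or.inl htw0)).comp w ht
  refine hp.congr_deriv (Eq.symm ?_)
  rw [zpow_sub_one₀ htw0, zpow_sub_one₀ hw]
  show _ = (m:ℂ) * (tw N j w ^ m / tw N j w) * (Complex.I ^ ((N : ℤ) - 1 - j) * (((((N : ℤ) + j) ^ 2 : ℤ) : ℂ) * (w ^ (((N : ℤ) + j) ^ 2) / w)))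
  rw [tw]
  push_cast
  field_simp

/-- With `ω = exp(πi/(4N))`, the limit as `w → ω` of
`(t_j(w)^m [N+j](w) ∏A(N+j,k)(w) + t_{-j}(w)^m [N-j](w) ∏A(N-j,k)(w)) / [N](w)`
equals `t_j(ω)^m · D_m(j,l)`, where `D_m` is evaluated at `v = exp(πi/N)`. -/
theorem tendsto_quotient_eq_t_pow_mul_D (N : ℕ) (hN : 0 < N) (m : ℤ) (j l : ℕ)
    (hj1 : 1 ≤ j) (hj2 : j ≤ N - 1) (hl : l ≤ N - 1) :
    Filter.Tendsto
      (fun w : ℂ =>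
        (tw N (j : ℤ) w ^ m * qw ((N : ℤ) + j) w *
            (∏ k ∈ Finset.Icc 1 l, Aw ((N : ℤ) + j) (k : ℤ) w) +
          tw N (-(j : ℤ)) w ^ m * qw ((N : ℤ) - j) w *
            ∏ k ∈ Finset.Icc 1 l, Aw ((N : ℤ) - j) (k : ℤ) w) / qw (N : ℤ) w)
      (nhdsWithin (Complex.exp (Real.pi * Complex.I / (4 * N)))
        {Complex.exp (Real.pi * Complex.I / (4 * N))}ᶜ)
      (nhds (tw N (j : ℤ) (Complex.exp (Real.pi * Complex.I / (4 * N))) ^ m *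
        DD N m (j : ℤ) l)) := by
  classical
  set ω : ℂ := Complex.exp (Real.pi * Complex.I / (4 * N)) with hωdef
  have hω : ω ≠ 0 := Complex.exp_ne_zero _
  have hNC : (N:ℂ) ≠ 0 := Nat.cast_ne_zero.2 hN.ne'
  have hN2 : 2 ≤ N := by omega
  set v : ℂ := vN N with hvdef
  have hv0 : v ≠ 0 := Complex.exp_ne_zero _
  have hvw : vw ω = v := by
    rw [vw, hvdef, vN, hωdef, ← Complex.exp_nat_mul]
    congr 1
    push_cast
    field_simp
  have hvN : v ^ ((N:ℕ):ℤ) = -1 := by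
    rw [hvdef, vN, zpow_natCast, ← Complex.exp_nat_mul,
      show (N:ℂ) * (Real.pi * Complex.I / N) = Real.pi * Complex.I by field_simp]
    exact Complex.exp_pi_mul_I
  have hω4N : ω ^ ((4*(N:ℤ))) = -1 := by
    rw [hωdef, ← Complex.exp_int_mul,
      show ((4*(N:ℤ) : ℤ):ℂ) * (Real.pi * Complex.I / (4*N)) = Real.pi * Complex.I by
        push_cast; field_simp]
    exact Complex.exp_pi_mul_I
  -- {1} ≠ 0
  have hbrw1 : brw 1 ω ≠ 0 := by
    rw [brw, hvw]
    intro h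
    have h' := sub_eq_zero.1 h
    have h2 : v ^ (2:ℤ) = 1 := by
      calc v^(2:ℤ) = v^(1:ℤ) * v^(1:ℤ) := by rw [← zpow_add₀ hv0]; norm_num
      _ = v^(-1:ℤ) * v^(1:ℤ) := by rw [h']
      _ = 1 := by rw [← zpow_add₀ hv0]; norm_num
    rw [hvdef, vN, ← Complex.exp_int_mul, Complex.exp_eq_one_iff] at h2
    obtain ⟨n, hn⟩ := h2
    have hπ : (Real.pi:ℂ) ≠ 0 := by exact_mod_cast Real.pi_ne_zero
    have hI : Complex.I ≠ 0 := Complex.I_ne_zero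
    have h3 : (1:ℂ) = (n:ℂ) * N := by
      field_simp at hn
      have hne : (2:ℂ) * (Real.pi * Complex.I) ≠ 0 := by
        simp [Complex.I_ne_zero, Real.pi_ne_zero, Complex.ofReal_ne_zero]
      apply mul_left_cancel₀ hne
      rw [mul_one]
      linear_combination (↑Real.pi * Complex.I) * hn
    have h4 : (1:ℤ) = n * N := by exact_mod_cast h3
    have h5 : (N:ℤ) ∣ 1 := ⟨n, by rw [h4]; ring⟩
    have h6 := Int.le_of_dvd one_pos h5
    omega

  -- value lemmas
  have hbrwv : ∀ n : ℤ, brw n ω = v ^ n - v ^ (-n) := fun n => by rw [brw, hvw]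
  have hbrv : ∀ n : ℤ, br N n = v ^ n - v ^ (-n) := fun n => rfl
  clear_value v ω
  have hvj0 : v ^ ((j:ℕ):ℤ) ≠ 0 := zpow_ne_zero _ hv0
  have hbp : ∀ n : ℤ, brw ((N:ℤ) + n) ω = -(v ^ n - v ^ (-n)) := by
    intro n
    rw [hbrwv, zpow_add₀ hv0, show -((N:ℤ)+n) = (-((N:ℕ):ℤ)) + (-n) by ring,
      zpow_add₀ hv0, zpow_neg v ((N:ℕ):ℤ), hvN]
    simp only [inv_neg, inv_one]
    ring
  have hbm : ∀ n : ℤ, brw ((N:ℤ) - n) ω = v ^ n - v ^ (-n) := by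
    intro n
    rw [hbrwv, show ((N:ℤ) - n) = ((N:ℕ):ℤ) + (-n) by ring, zpow_add₀ hv0,
      show -(((N:ℕ):ℤ) + -n) = (-((N:ℕ):ℤ)) + n by ring,
      zpow_add₀ hv0, zpow_neg v ((N:ℕ):ℤ), hvN]
    simp only [inv_neg, inv_one]
    ring
  have hbdgp : ∀ n : ℤ, bd ((N:ℤ) + n) ω = 4*((N:ℂ)+(n:ℂ))/ω * (-(v ^ n + v ^ (-n))) := by
    intro n
    rw [bd, hvw, zpow_add₀ hv0, show -((N:ℤ)+n) = (-((N:ℕ):ℤ)) + (-n) by ring,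
      zpow_add₀ hv0, zpow_neg v ((N:ℕ):ℤ), hvN]
    push_cast
    simp only [inv_neg, inv_one]
    ring
  have hbdgm : ∀ n : ℤ, bd ((N:ℤ) - n) ω = 4*((N:ℂ)-(n:ℂ))/ω * (-(v ^ n + v ^ (-n))) := by
    intro n
    rw [bd, hvw, show ((N:ℤ) - n) = ((N:ℕ):ℤ) + (-n) by ring, zpow_add₀ hv0,
      show -(((N:ℕ):ℤ) + -n) = (-((N:ℕ):ℤ)) + n by ring,
      zpow_add₀ hv0, zpow_neg v ((N:ℕ):ℤ), hvN]
    push_cast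
    simp only [inv_neg, inv_one]
    ring
  have hbdp : bd ((N:ℤ) + (j:ℤ)) ω = 4*((N:ℂ)+(j:ℂ))/ω * (-(v ^ ((j:ℕ):ℤ) + v ^ (-((j:ℕ):ℤ)))) := by
    rw [hbdgp]; norm_num
  have hbdm : bd ((N:ℤ) - (j:ℤ)) ω = 4*((N:ℂ)-(j:ℂ))/ω * (-(v ^ ((j:ℕ):ℤ) + v ^ (-((j:ℕ):ℤ)))) := by
    rw [hbdgm]; norm_num
  have hbdN : bd ((N:ℤ)) ω = -8*(N:ℂ)/ω := by
    rw [bd, hvw, hvN, zpow_neg v ((N:ℕ):ℤ), hvN]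
    push_cast
    simp only [inv_neg, inv_one]
    ring
  have hbdne : bd ((N:ℤ)) ω ≠ 0 := by
    rw [hbdN]
    apply div_ne_zero _ hω
    simp [hNC]
  have hgN0 : brw ((N:ℤ)) ω = 0 := by
    rw [hbrwv, zpow_neg v ((N:ℕ):ℤ), hvN]
    norm_num
  -- t_{-j}(ω) = t_j(ω)
  have htt : tw N (-(j:ℤ)) ω = tw N ((j:ℤ)) ω := by
    rw [tw, tw, show (N:ℤ)-1-(-(j:ℤ)) = ((N:ℤ)-1-(j:ℤ)) + 2*(j:ℤ) by ring,
      show ((N:ℤ)+(-(j:ℤ)))^2 = ((N:ℤ)+(j:ℤ))^2 + (4*(N:ℤ))*(-(j:ℤ)) by ring,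
      zpow_add₀ Complex.I_ne_zero, zpow_add₀ hω,
      zpow_mul Complex.I 2 (j:ℤ), zpow_mul ω (4*(N:ℤ)) (-(j:ℤ)), hω4N,
      show (Complex.I)^(2:ℤ) = -1 by rw [show (2:ℤ) = ((2:ℕ):ℤ) by norm_num, zpow_natCast]; exact Complex.I_sq]
    rw [zpow_neg ((-1:ℂ)) ((j:ℕ):ℤ)]
    have hne : ((-1:ℂ))^((j:ℕ):ℤ) ≠ 0 := zpow_ne_zero _ (by norm_num)
    field_simp
  -- Aw values
  have hAwp : ∀ k : ℕ, Aw ((N:ℤ) + (j:ℤ)) (k:ℤ) ω = AA N (j:ℤ) (k:ℤ) := by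
    intro k
    rw [Aw, AA, show ((N:ℤ)+(j:ℤ)) - (k:ℤ) = (N:ℤ) + ((j:ℤ) - (k:ℤ)) by ring,
      show ((N:ℤ)+(j:ℤ)) + (k:ℤ) = (N:ℤ) + ((j:ℤ) + (k:ℤ)) by ring, hbp, hbp, hbrv, hbrv]
    ring
  have hAwm : ∀ k : ℕ, Aw ((N:ℤ) - (j:ℤ)) (k:ℤ) ω = AA N (j:ℤ) (k:ℤ) := by
    intro k
    rw [Aw, AA, show ((N:ℤ)-(j:ℤ)) - (k:ℤ) = (N:ℤ) - ((j:ℤ) + (k:ℤ)) by ring,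
      show ((N:ℤ)-(j:ℤ)) + (k:ℤ) = (N:ℤ) - ((j:ℤ) - (k:ℤ)) by ring, hbm, hbm, hbrv, hbrv]
    ring
  -- derivatives
  have h1 := hasDerivAt_tw_zpow N (j:ℤ) m hω
  have h4 := hasDerivAt_tw_zpow N (-(j:ℤ)) m hω
  have h2 := hasDerivAt_brw ((N:ℤ) + (j:ℤ)) hω
  have h5 := hasDerivAt_brw ((N:ℤ) - (j:ℤ)) hω
  have h3 : HasDerivAt (fun w => ∏ k ∈ Finset.Icc 1 l, Aw ((N:ℤ) + (j:ℤ)) (k:ℤ) w)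
      (∑ k ∈ Finset.Icc 1 l, (∏ k' ∈ (Finset.Icc 1 l).erase k, Aw ((N:ℤ) + (j:ℤ)) (k':ℤ) ω) •
        AD ((N:ℤ) + (j:ℤ)) (k:ℤ) ω) ω :=
    HasDerivAt.fun_finsetProd (fun k _ => hasDerivAt_Aw _ _ hω)
  have h6 : HasDerivAt (fun w => ∏ k ∈ Finset.Icc 1 l, Aw ((N:ℤ) - (j:ℤ)) (k:ℤ) w)
      (∑ k ∈ Finset.Icc 1 l, (∏ k' ∈ (Finset.Icc 1 l).erase k, Aw ((N:ℤ) - (j:ℤ)) (k':ℤ) ω) •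
        AD ((N:ℤ) - (j:ℤ)) (k:ℤ) ω) ω :=
    HasDerivAt.fun_finsetProd (fun k _ => hasDerivAt_Aw _ _ hω)
  have hH := ((h1.fun_mul h2).fun_mul h3).fun_add ((h4.fun_mul h5).fun_mul h6)
  have hgN := hasDerivAt_brw ((N:ℤ)) hω
  have hH0 : (fun w => tw N (j:ℤ) w ^ m * brw ((N:ℤ) + (j:ℤ)) w *
        (∏ k ∈ Finset.Icc 1 l, Aw ((N:ℤ) + (j:ℤ)) (k:ℤ) w) +
      tw N (-(j:ℤ)) w ^ m * brw ((N:ℤ) - (j:ℤ)) w *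
        ∏ k ∈ Finset.Icc 1 l, Aw ((N:ℤ) - (j:ℤ)) (k:ℤ) w) ω = 0 := by
    simp only
    rw [htt, hbp, hbm, Finset.prod_congr rfl (fun k _ => hAwp k),
      Finset.prod_congr rfl (fun k _ => hAwm k)]
    ring
  have hT := tendsto_div_slope hH hgN hH0 hgN0 hbdne
  have hcongr : ∀ᶠ w in 𝓝[≠] ω, (tw N (j:ℤ) w ^ m * brw ((N:ℤ) + (j:ℤ)) w *
        (∏ k ∈ Finset.Icc 1 l, Aw ((N:ℤ) + (j:ℤ)) (k:ℤ) w) +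
      tw N (-(j:ℤ)) w ^ m * brw ((N:ℤ) - (j:ℤ)) w *
        ∏ k ∈ Finset.Icc 1 l, Aw ((N:ℤ) - (j:ℤ)) (k:ℤ) w) / brw ((N:ℤ)) w =
      (tw N (j : ℤ) w ^ m * qw ((N : ℤ) + j) w *
            (∏ k ∈ Finset.Icc 1 l, Aw ((N : ℤ) + j) (k : ℤ) w) +
          tw N (-(j : ℤ)) w ^ m * qw ((N : ℤ) - j) w *
            ∏ k ∈ Finset.Icc 1 l, Aw ((N : ℤ) - j) (k : ℤ) w) / qw (N : ℤ) w := by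
    have hb1 : ∀ᶠ w in 𝓝 ω, brw 1 w ≠ 0 :=
      (hasDerivAt_brw 1 hω).continuousAt.eventually_ne hbrw1
    filter_upwards [nhdsWithin_le_nhds hb1] with w hb1w
    rw [qw, qw, qw, div_div_eq_mul_div]
    congr 1
    field_simp
  have hTend := hT.congr' hcongr
  -- final algebra
  convert hTend using 2
  rw [eq_div_iff hbdne]
  simp only [smul_eq_mul, hAwp, hAwm, htt, hbp, hbm, hbdp, hbdm, hbdN, DD, hbrv]
  have key : ∀ k : ℕ,
      (-(v ^ ((j:ℕ):ℤ) - v ^ (-((j:ℕ):ℤ)))) * AD ((N:ℤ) + (j:ℤ)) (k:ℤ) ω +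
        (v ^ ((j:ℕ):ℤ) - v ^ (-((j:ℕ):ℤ))) * AD ((N:ℤ) - (j:ℤ)) (k:ℤ) ω =
      (-(16*(N:ℂ)/ω)) * (v ^ ((j:ℕ):ℤ) - v ^ (-((j:ℕ):ℤ)))^2 * (v ^ ((j:ℕ):ℤ) + v ^ (-((j:ℕ):ℤ))) := by
    intro k
    rw [AD, AD, show ((N:ℤ)+(j:ℤ)) - (k:ℤ) = (N:ℤ) + ((j:ℤ)-(k:ℤ)) by ring,
      show ((N:ℤ)+(j:ℤ)) + (k:ℤ) = (N:ℤ) + ((j:ℤ)+(k:ℤ)) by ring,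
      show ((N:ℤ)-(j:ℤ)) - (k:ℤ) = (N:ℤ) - ((j:ℤ)+(k:ℤ)) by ring,
      show ((N:ℤ)-(j:ℤ)) + (k:ℤ) = (N:ℤ) - ((j:ℤ)-(k:ℤ)) by ring]
    simp only [hbp, hbm, hbdgp, hbdgm]
    push_cast
    rw [show ((j:ℤ) - (k:ℤ)) = (j:ℤ) + (-(k:ℤ)) by ring,
      show -((j:ℤ) + -(k:ℤ)) = (-(j:ℤ)) + (k:ℤ) by ring,
      show -((j:ℤ) + (k:ℤ)) = (-(j:ℤ)) + (-(k:ℤ)) by ring]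
    simp only [zpow_add₀ hv0]
    set a := v ^ ((j:ℕ):ℤ) with ha
    set ai := v ^ (-((j:ℕ):ℤ)) with hai
    set b := v ^ ((k:ℕ):ℤ) with hb
    set bi := v ^ (-((k:ℕ):ℤ)) with hbi
    have hbbi : b * bi = 1 := by
      rw [hb, hbi, ← zpow_add₀ hv0]
      simp
    linear_combination (-(16*(N:ℂ)/ω)) * (a - ai)^2 * (a + ai) * hbbi
  have hcomb :
      tw N (j:ℤ) ω ^ m * -(v ^ ((j:ℕ):ℤ) - v ^ (-((j:ℕ):ℤ))) *
        (∑ x ∈ Finset.Icc 1 l, (∏ k ∈ (Finset.Icc 1 l).erase x, AA N (j:ℤ) (k:ℤ)) *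
          AD ((N:ℤ) + (j:ℤ)) (x:ℤ) ω) +
      tw N (j:ℤ) ω ^ m * (v ^ ((j:ℕ):ℤ) - v ^ (-((j:ℕ):ℤ))) *
        (∑ x ∈ Finset.Icc 1 l, (∏ k ∈ (Finset.Icc 1 l).erase x, AA N (j:ℤ) (k:ℤ)) *
          AD ((N:ℤ) - (j:ℤ)) (x:ℤ) ω) =
      tw N (j:ℤ) ω ^ m * (-(16*(N:ℂ)/ω)) * (v ^ ((j:ℕ):ℤ) - v ^ (-((j:ℕ):ℤ)))^2 *
        (v ^ ((j:ℕ):ℤ) + v ^ (-((j:ℕ):ℤ))) *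
        (∑ x ∈ Finset.Icc 1 l, ∏ k ∈ (Finset.Icc 1 l).erase x, AA N (j:ℤ) (k:ℤ)) := by
    rw [Finset.mul_sum, Finset.mul_sum, Finset.mul_sum, ← Finset.sum_add_distrib]
    refine Finset.sum_congr rfl fun k hk => ?_
    linear_combination (tw N (j:ℤ) ω ^ m *
      (∏ k' ∈ (Finset.Icc 1 l).erase k, AA N (j:ℤ) (k':ℤ))) * key k
  rw [← hvdef]
  push_cast
  push_cast at hcomb
  set t' := tw N (↑j) ω ^ m with ht'
  set P' := ∏ k ∈ Finset.Icc 1 l, AA N (↑j) (↑k) with hP'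
  set S' := ∑ x ∈ Finset.Icc 1 l, ∏ k ∈ (Finset.Icc 1 l).erase x, AA N (↑j) (↑k) with hS'
  set Sp' := ∑ x ∈ Finset.Icc 1 l, (∏ k ∈ (Finset.Icc 1 l).erase x, AA N (↑j) (↑k)) * AD ((N:ℤ) + ↑j) (↑x) ω with hSp'
  set Sm' := ∑ x ∈ Finset.Icc 1 l, (∏ k ∈ (Finset.Icc 1 l).erase x, AA N (↑j) (↑k)) * AD ((N:ℤ) - ↑j) (↑x) ω with hSm'
  linear_combination -hcomb
end

section
/- Let N be a positive integer, v := exp(πi/N), m an integer, and j, l integers with 1 ≤ j ≤ N−1 and 0 ≤ l ≤ N−1. Then: (a) if l < min(j, N−j), then D_m(j,l) = ( mj/2 + (v^j + v^{−j})/{j} + 2{2j}·∑_{k=1}^l 1/A(j,k) ) · S(j−l, j+l); (b) if j ≤ l < N−j, then D_m(j,l) = 2·S'(j−l, j+l); (c) if N−j ≤ l < j, then D_m(j,l) = −2·S'(j−l, j+l); (d) if l ≥ max(j, N−j), then D_m(j,l) = 0. -/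
open Complex

/-- `S(k,l) = ∏_{k ≤ r ≤ l} {r}`. -/
noncomputable def SS (N : ℕ) (k l : ℤ) : ℂ := ∏ r ∈ Finset.Icc k l, br N r

/-- `S'(k,l) = ∏_{k ≤ r ≤ l, r ∉ {0,N}} {r}`. -/
noncomputable def SS' (N : ℕ) (k l : ℤ) : ℂ :=
  ∏ r ∈ (Finset.Icc k l).filter (fun r => r ≠ 0 ∧ r ≠ (N : ℤ)), br N r


section Helpers

lemma vN_zpow (N : ℕ) (n : ℤ) : vN N ^ n = Complex.exp (n * (Real.pi * Complex.I / N)) := by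
  rw [vN, ← Complex.exp_int_mul]

lemma br_natCast (N : ℕ) (hN : 0 < N) : br N (N:ℤ) = 0 := by
  rw [br, zpow_neg, vN_zpow_N N hN]
  norm_num

lemma br_sub_N (N : ℕ) (hN : 0 < N) (n : ℤ) : br N (n - N) = - br N n := by
  have hv := vN_ne_zero N
  have h := vN_zpow_N N hN
  have h1 : vN N ^ (n - (N:ℤ)) = - vN N ^ n := by
    rw [zpow_sub₀ hv, h]; field_simp
  have h2 : vN N ^ (-(n - (N:ℤ))) = - vN N ^ (-n) := by
    rw [neg_sub, zpow_sub₀ hv, h, zpow_neg]; field_simp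
  rw [br, br, h1, h2]; ring

lemma br_two_mul (N : ℕ) (j : ℤ) :
    br N (2*j) = (vN N ^ j + vN N ^ (-j)) * br N j := by
  have hv := vN_ne_zero N
  have hz : vN N ^ j ≠ 0 := zpow_ne_zero _ hv
  rw [br, br, two_mul, zpow_add₀ hv, neg_add, zpow_add₀ hv, zpow_neg]
  field_simp
  ring

lemma br_ne_zero (N : ℕ) (hN : 0 < N) (n : ℤ) (h1 : 0 < n) (h2 : n < 2*N)
    (h3 : n ≠ N) : br N n ≠ 0 := by
  have hv := vN_ne_zero N
  have hπ : (Real.pi : ℂ) ≠ 0 := by exact_mod_cast Real.pi_ne_zero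
  have hI := Complex.I_ne_zero
  have hN' : (N:ℂ) ≠ 0 := Nat.cast_ne_zero.mpr hN.ne'
  have hNZ : (0:ℤ) < (N:ℤ) := by exact_mod_cast hN
  rw [br, sub_ne_zero, vN_zpow, vN_zpow]
  intro hEq
  rw [Complex.exp_eq_exp_iff_exists_int] at hEq
  obtain ⟨k, hk⟩ := hEq
  have hnk : (n:ℂ) * (Real.pi * Complex.I) = (k * N) * (Real.pi * Complex.I) := by
    field_simp at hk
    push_cast at hk
    linear_combination (Real.pi * Complex.I) * hk / 2
  have hpi : ((n:ℂ)) = (k*N :ℤ) := by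
    push_cast
    exact mul_right_cancel₀ (mul_ne_zero hπ hI) hnk
  have hn : n = k * N := by exact_mod_cast hpi
  rcases lt_trichotomy k 1 with h | h | h
  · have : k ≤ 0 := by omega
    nlinarith
  · subst h; omega
  · nlinarith

lemma prod_Icc_center (f : ℤ → ℂ) (j : ℤ) (l : ℕ) :
    ∏ r ∈ Finset.Icc (j - (l:ℤ)) (j + (l:ℤ)), f r
      = f j * ∏ k ∈ Finset.Icc 1 l, (f (j - (k:ℤ)) * f (j + (k:ℤ))) := by
  induction l with
  | zero => simp
  | succ l ih =>
    have hset : Finset.Icc (j - ((l+1:ℕ):ℤ)) (j + ((l+1:ℕ):ℤ))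
        = insert (j - ((l+1:ℕ):ℤ)) (insert (j + ((l+1:ℕ):ℤ))
            (Finset.Icc (j - (l:ℤ)) (j + (l:ℤ)))) := by
      ext x
      simp only [Finset.mem_Icc, Finset.mem_insert]
      push_cast
      omega
    have h1 : (j - ((l+1:ℕ):ℤ)) ∉ insert (j + ((l+1:ℕ):ℤ))
        (Finset.Icc (j - (l:ℤ)) (j + (l:ℤ))) := by
      simp only [Finset.mem_Icc, Finset.mem_insert]
      push_cast
      omega
    have h2 : (j + ((l+1:ℕ):ℤ)) ∉ Finset.Icc (j - (l:ℤ)) (j + (l:ℤ)) := by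
      simp only [Finset.mem_Icc]
      push_cast
      omega
    rw [hset, Finset.prod_insert h1, Finset.prod_insert h2, ih,
      Finset.prod_Icc_succ_top (by omega : 1 ≤ l + 1)]
    ring

lemma SS'_eq (N : ℕ) (j : ℤ) (l : ℕ) :
    SS' N (j - (l:ℤ)) (j + (l:ℤ)) =
      (if j ≠ 0 ∧ j ≠ (N:ℤ) then br N j else 1) *
        ∏ k ∈ Finset.Icc 1 l,
          ((if j - (k:ℤ) ≠ 0 ∧ j - (k:ℤ) ≠ (N:ℤ) then br N (j - (k:ℤ)) else 1) *
           (if j + (k:ℤ) ≠ 0 ∧ j + (k:ℤ) ≠ (N:ℤ) then br N (j + (k:ℤ)) else 1)) := by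
  rw [SS', Finset.prod_filter,
    prod_Icc_center (fun r => if r ≠ 0 ∧ r ≠ (N:ℤ) then br N r else 1)]

end Helpers

/-- The case analysis for `D_m(j,l)` (Lemma 3 of the paper):
(a) if `l < min(j, N-j)` then `D_m(j,l) = (mj/2 + (v^j+v^{-j})/{j} + 2{2j}∑ 1/A(j,k))·S(j-l,j+l)`;
(b) if `j ≤ l < N-j` then `D_m(j,l) = 2 S'(j-l,j+l)`;
(c) if `N-j ≤ l < j` then `D_m(j,l) = -2 S'(j-l,j+l)`;
(d) if `l ≥ max(j, N-j)` then `D_m(j,l) = 0`. -/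
theorem D_cases (N : ℕ) (hN : 0 < N) (m : ℤ) (j l : ℕ)
    (hj1 : 1 ≤ j) (hj2 : j ≤ N - 1) (hl : l ≤ N - 1) :
    (l < min j (N - j) →
      DD N m (j : ℤ) l =
        ((m : ℂ) * (j : ℂ) / 2 + (vN N ^ (j : ℤ) + vN N ^ (-(j : ℤ))) / br N (j : ℤ) +
            2 * br N (2 * (j : ℤ)) * ∑ k ∈ Finset.Icc 1 l, 1 / AA N (j : ℤ) (k : ℤ)) *
          SS N ((j : ℤ) - (l : ℤ)) ((j : ℤ) + (l : ℤ))) ∧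
    (j ≤ l ∧ l < N - j →
      DD N m (j : ℤ) l = 2 * SS' N ((j : ℤ) - (l : ℤ)) ((j : ℤ) + (l : ℤ))) ∧
    (N - j ≤ l ∧ l < j →
      DD N m (j : ℤ) l = -2 * SS' N ((j : ℤ) - (l : ℤ)) ((j : ℤ) + (l : ℤ))) ∧
    (max j (N - j) ≤ l → DD N m (j : ℤ) l = 0) := by
  refine ⟨?_, ?_, ?_, ?_⟩
  · -- case (a)
    intro h
    have hjN : j < N := by omega
    have hlj : l < j := lt_of_lt_of_le h (min_le_left _ _)
    have hlN : l + j < N := by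
      have := lt_of_lt_of_le h (min_le_right _ _); omega
    have hbrj : br N (j:ℤ) ≠ 0 :=
      br_ne_zero N hN _ (by omega) (by omega) (by omega)
    have hAne : ∀ k ∈ Finset.Icc 1 l, AA N (j:ℤ) (k:ℤ) ≠ 0 := by
      intro k hk
      simp only [Finset.mem_Icc] at hk
      exact mul_ne_zero
        (br_ne_zero N hN _ (by omega) (by omega) (by omega))
        (br_ne_zero N hN _ (by omega) (by omega) (by omega))
    have hS : SS N ((j:ℤ) - (l:ℤ)) ((j:ℤ) + (l:ℤ))
        = br N (j:ℤ) * ∏ k ∈ Finset.Icc 1 l, AA N (j:ℤ) (k:ℤ) := by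
      rw [SS, prod_Icc_center (br N) (j:ℤ) l]
      rfl
    have hsum : ∑ k ∈ Finset.Icc 1 l, ∏ k' ∈ (Finset.Icc 1 l).erase k, AA N (j:ℤ) (k':ℤ)
        = (∏ k ∈ Finset.Icc 1 l, AA N (j:ℤ) (k:ℤ)) *
            ∑ k ∈ Finset.Icc 1 l, 1 / AA N (j:ℤ) (k:ℤ) := by
      rw [Finset.mul_sum]
      refine Finset.sum_congr rfl (fun k hk => ?_)
      rw [← Finset.mul_prod_erase _ _ hk, mul_one_div, mul_comm,
        mul_div_assoc, div_self (hAne k hk), mul_one]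
    rw [DD, hsum, hS, br_two_mul]
    field_simp
    push_cast
    ring
  · -- case (b)
    rintro ⟨hjl, hlNj⟩
    have hjN : j < N := by omega
    have hlN : j + l < N := by omega
    have hjmem : j ∈ Finset.Icc 1 l := by simp only [Finset.mem_Icc]; omega
    have hAjj : AA N (j:ℤ) (j:ℤ) = 0 := by simp [AA, br]
    have hP : ∏ k ∈ Finset.Icc 1 l, AA N (j:ℤ) (k:ℤ) = 0 :=
      Finset.prod_eq_zero hjmem hAjj
    have hsum : ∑ k ∈ Finset.Icc 1 l, ∏ k' ∈ (Finset.Icc 1 l).erase k, AA N (j:ℤ) (k':ℤ)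
        = ∏ k' ∈ (Finset.Icc 1 l).erase j, AA N (j:ℤ) (k':ℤ) := by
      refine Finset.sum_eq_single_of_mem j hjmem (fun k hk hkj => ?_)
      exact Finset.prod_eq_zero (Finset.mem_erase.mpr ⟨Ne.symm hkj, hjmem⟩) hAjj
    have hS' : SS' N ((j:ℤ) - (l:ℤ)) ((j:ℤ) + (l:ℤ))
        = br N ((j:ℤ) + (j:ℤ)) * br N (j:ℤ) *
            ∏ k' ∈ (Finset.Icc 1 l).erase j, AA N (j:ℤ) (k':ℤ) := by
      rw [SS'_eq, if_pos ⟨by omega, by omega⟩, ← Finset.mul_prod_erase _ _ hjmem,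
        if_neg (by simp), if_pos ⟨by omega, by omega⟩, one_mul]
      rw [Finset.prod_congr rfl (fun k hk => ?_)]
      · ring
      · rw [Finset.mem_erase, Finset.mem_Icc] at hk
        rw [if_pos ⟨by omega, by omega⟩, if_pos ⟨by omega, by omega⟩]
        rfl
    rw [DD, hP, hsum, hS', show ((j:ℤ) + (j:ℤ)) = 2*(j:ℤ) by ring, br_two_mul]
    ring
  · -- case (c)
    rintro ⟨hNjl, hlj⟩
    have hjN : j < N := by omega
    have hN2j : N < 2*j := by omega
    have hmem : N - j ∈ Finset.Icc 1 l := by simp only [Finset.mem_Icc]; omega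
    have hcast : ((N - j : ℕ) : ℤ) = (N:ℤ) - (j:ℤ) := by omega
    have hA0 : AA N (j:ℤ) ((N - j : ℕ):ℤ) = 0 := by
      rw [AA, hcast, show (j:ℤ) + ((N:ℤ) - (j:ℤ)) = (N:ℤ) by ring, br_natCast N hN,
        mul_zero]
    have hP : ∏ k ∈ Finset.Icc 1 l, AA N (j:ℤ) (k:ℤ) = 0 :=
      Finset.prod_eq_zero hmem hA0
    have hsum : ∑ k ∈ Finset.Icc 1 l, ∏ k' ∈ (Finset.Icc 1 l).erase k, AA N (j:ℤ) (k':ℤ)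
        = ∏ k' ∈ (Finset.Icc 1 l).erase (N - j), AA N (j:ℤ) (k':ℤ) := by
      refine Finset.sum_eq_single_of_mem _ hmem (fun k hk hkj => ?_)
      exact Finset.prod_eq_zero (Finset.mem_erase.mpr ⟨Ne.symm hkj, hmem⟩) hA0
    have hS' : SS' N ((j:ℤ) - (l:ℤ)) ((j:ℤ) + (l:ℤ))
        = br N (2*(j:ℤ) - (N:ℤ)) * br N (j:ℤ) *
            ∏ k' ∈ (Finset.Icc 1 l).erase (N - j), AA N (j:ℤ) (k':ℤ) := by
      rw [SS'_eq, if_pos ⟨by omega, by omega⟩, ← Finset.mul_prod_erase _ _ hmem,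
        if_pos ⟨by omega, by omega⟩,
        if_neg (by rw [hcast]; simp [show (j:ℤ) + ((N:ℤ) - (j:ℤ)) = (N:ℤ) by ring]),
        mul_one]
      rw [Finset.prod_congr rfl (fun k hk => ?_)]
      · rw [hcast, show (j:ℤ) - ((N:ℤ) - (j:ℤ)) = 2*(j:ℤ) - (N:ℤ) by ring]
        ring
      · rw [Finset.mem_erase, Finset.mem_Icc] at hk
        have hkNj : (k:ℤ) ≠ (N:ℤ) - (j:ℤ) := by omega
        rw [if_pos ⟨by omega, by omega⟩, if_pos ⟨by omega, by omega⟩]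
        rfl
    rw [DD, hP, hsum, hS', br_sub_N N hN, br_two_mul]
    ring
  · -- case (d)
    intro h
    have hjN : j < N := by omega
    have hjl : j ≤ l := le_trans (le_max_left _ _) h
    have hNjl : N - j ≤ l := le_trans (le_max_right _ _) h
    have hjmem : j ∈ Finset.Icc 1 l := by simp only [Finset.mem_Icc]; omega
    have hmem : N - j ∈ Finset.Icc 1 l := by simp only [Finset.mem_Icc]; omega
    have hcast : ((N - j : ℕ) : ℤ) = (N:ℤ) - (j:ℤ) := by omega
    have hAjj : AA N (j:ℤ) (j:ℤ) = 0 := by simp [AA, br]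
    have hA0 : AA N (j:ℤ) ((N - j : ℕ):ℤ) = 0 := by
      rw [AA, hcast, show (j:ℤ) + ((N:ℤ) - (j:ℤ)) = (N:ℤ) by ring, br_natCast N hN,
        mul_zero]
    have hP : ∏ k ∈ Finset.Icc 1 l, AA N (j:ℤ) (k:ℤ) = 0 :=
      Finset.prod_eq_zero hjmem hAjj
    by_cases h2j : 2*j = N
    · have ha : vN N ^ (j:ℤ) + vN N ^ (-(j:ℤ)) = 0 := by
        have hz : vN N ^ (j:ℤ) ≠ 0 := zpow_ne_zero _ (vN_ne_zero N)
        have hsq : vN N ^ (j:ℤ) * vN N ^ (j:ℤ) = -1 := by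
          rw [← zpow_add₀ (vN_ne_zero N), show (j:ℤ) + (j:ℤ) = ((N:ℕ):ℤ) by omega]
          exact vN_zpow_N N hN
        have hinv : (vN N ^ (j:ℤ))⁻¹ = - vN N ^ (j:ℤ) := by
          exact inv_eq_of_mul_eq_one_right (by linear_combination - hsq)
        rw [zpow_neg, hinv]
        ring
      rw [DD, hP, ha]
      ring
    · have hsum : ∑ k ∈ Finset.Icc 1 l, ∏ k' ∈ (Finset.Icc 1 l).erase k,
          AA N (j:ℤ) (k':ℤ) = 0 := by
        refine Finset.sum_eq_zero (fun k hk => ?_)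
        by_cases hkj : k = j
        · subst hkj
          exact Finset.prod_eq_zero
            (Finset.mem_erase.mpr ⟨by omega, hmem⟩) hA0
        · exact Finset.prod_eq_zero
            (Finset.mem_erase.mpr ⟨Ne.symm hkj, hjmem⟩) hAjj
      rw [DD, hP, hsum]
      ring
end
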